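/- The point (1,1) lies on the curve y² = x³ + x − 1, and the rational points of this curve are Zariski dense in it. -/

import Mathlib

private def ecDouble (p : ℚ × ℚ) : ℚ × ℚ :=
  let x := p.1; let y := p.2
  let l := (3 * x ^ 2 + 1) / (2 * y)
  let x2 := l ^ 2 - 2 * x
  (x2, l * (x - x2) - y)

private lemma dom_add {c : ℤ} {q r : ℚ} (hq : q = 0 ∨ c < padicValRat 2 q)
    (hr : r = 0 ∨ c < padicValRat 2 r) : q + r = 0 ∨ c < padicValRat 2 (q + r) := by
  rcases hq with rfl | hq
  · simpa using hr
  rcases hr with rfl | hr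
  · simpa using Or.inr hq
  by_cases h : q + r = 0
  · exact Or.inl h
  · exact Or.inr (lt_of_lt_of_le (lt_min hq hr) (padicValRat.min_le_padicValRat_add h))

private lemma v_add_dom {q r : ℚ} (hq : q ≠ 0)
    (hr : r = 0 ∨ padicValRat 2 q < padicValRat 2 r) :
    q + r ≠ 0 ∧ padicValRat 2 (q + r) = padicValRat 2 q := by
  rcases hr with rfl | hr
  · simpa using hq
  by_cases hr0 : r = 0
  · subst hr0; simpa using hq
  have hs : q + r ≠ 0 := by
    intro h
    have : r = -q := by linarith [h]
    subst this
    rw [padicValRat.neg] at hr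
    exact lt_irrefl _ hr
  exact ⟨hs, padicValRat.add_eq_of_lt hs hq hr0 hr⟩

private lemma v_two : padicValRat 2 (2 : ℚ) = 1 := padicValRat.self one_lt_two

private lemma step {x y : ℚ} (hc : y ^ 2 = x ^ 3 + x - 1) (hx : x ≠ 0)
    (hv : padicValRat 2 x ≤ -2) :
    (ecDouble (x, y)).2 ^ 2 = (ecDouble (x, y)).1 ^ 3 + (ecDouble (x, y)).1 - 1 ∧
      (ecDouble (x, y)).1 ≠ 0 ∧
      padicValRat 2 (ecDouble (x, y)).1 = padicValRat 2 x - 2 := by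
  set V := padicValRat 2 x with hV
  have hVlt : V < 0 := lt_of_le_of_lt hv (by norm_num)
  have hx3 : (x : ℚ) ^ 3 ≠ 0 := pow_ne_zero _ hx
  have hvx3 : padicValRat 2 (x ^ 3) = 3 * V := by
    rw [padicValRat.pow x]; push_cast; ring
  -- valuation of x^3 + x - 1
  have hA : x ^ 3 + (x + (-1)) ≠ 0 ∧ padicValRat 2 (x ^ 3 + (x + (-1))) = 3 * V := by
    rw [← hvx3]
    refine v_add_dom hx3 ?_
    rw [hvx3]
    refine dom_add (Or.inr ?_) (Or.inr ?_)
    · rw [← hV]; linarith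
    · rw [show ((-1 : ℚ)) = -(1:ℚ) by norm_num, padicValRat.neg, padicValRat.one]; linarith
  have hrw : x ^ 3 + (x + (-1)) = x ^ 3 + x - 1 := by ring
  rw [hrw] at hA
  have hrhs : x ^ 3 + x - 1 ≠ 0 := hA.1
  have hy : y ≠ 0 := by
    intro h; rw [h] at hc; exact hrhs (by linarith [hc])
  have hvy : 2 * padicValRat 2 y = 3 * V := by
    have := padicValRat.pow (p := 2) y (k := 2)
    rw [hc, hA.2] at this; push_cast at this; linarith
  -- x-coordinate formula
  set N : ℚ := x ^ 4 - 2 * x ^ 2 + 8 * x + 1 with hN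
  have hx2 : (ecDouble (x, y)).1 = N / (4 * y ^ 2) := by
    show ((3 * x ^ 2 + 1) / (2 * y)) ^ 2 - 2 * x = N / (4 * y ^ 2)
    rw [hN]
    field_simp
    ring_nf
    linear_combination (-32 * x) * hc
  -- valuation of N
  have hvN : N ≠ 0 ∧ padicValRat 2 N = 4 * V := by
    have hx4 : (x : ℚ) ^ 4 ≠ 0 := pow_ne_zero _ hx
    have hvx4 : padicValRat 2 (x ^ 4) = 4 * V := by
      rw [padicValRat.pow x]; push_cast; ring
    have h8x : padicValRat 2 (8 * x) = 3 + V := by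
      rw [padicValRat.mul (by norm_num) hx, show ((8:ℚ)) = 2 ^ 3 by norm_num,
        padicValRat.pow (2:ℚ), v_two]
      push_cast; ring
    have h2x2 : padicValRat 2 (-(2 * x ^ 2)) = 1 + 2 * V := by
      rw [padicValRat.neg, padicValRat.mul (by norm_num) (pow_ne_zero _ hx), v_two,
        padicValRat.pow x]
      push_cast; ring
    have hdom : x ^ 4 + (-(2 * x ^ 2) + (8 * x + 1)) ≠ 0 ∧
        padicValRat 2 (x ^ 4 + (-(2 * x ^ 2) + (8 * x + 1))) = 4 * V := by
      rw [← hvx4]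
      refine v_add_dom hx4 ?_
      rw [hvx4]
      refine dom_add (Or.inr ?_) (dom_add (Or.inr ?_) (Or.inr ?_))
      · rw [h2x2]; linarith
      · rw [h8x]; linarith
      · rw [padicValRat.one]; linarith
    have hrw2 : x ^ 4 + (-(2 * x ^ 2) + (8 * x + 1)) = N := by rw [hN]; ring
    rw [hrw2] at hdom
    exact hdom
  have hy2 : (4 : ℚ) * y ^ 2 ≠ 0 := by positivity
  have hvden : padicValRat 2 (4 * y ^ 2) = 2 + 3 * V := by
    rw [padicValRat.mul (by norm_num) (pow_ne_zero _ hy), show ((4:ℚ)) = 2 ^ 2 by norm_num,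
      padicValRat.pow (2:ℚ), v_two, padicValRat.pow y]
    push_cast; linarith
  have hne : (ecDouble (x, y)).1 ≠ 0 := by
    rw [hx2]; exact div_ne_zero hvN.1 hy2
  have hval : padicValRat 2 (ecDouble (x, y)).1 = V - 2 := by
    rw [hx2, padicValRat.div hvN.1 hy2, hvN.2, hvden]; ring
  refine ⟨?_, hne, hval⟩
  -- curve equation for the doubled point
  show (((3 * x ^ 2 + 1) / (2 * y)) * (x - (((3 * x ^ 2 + 1) / (2 * y)) ^ 2 - 2 * x)) - y) ^ 2
      = (((3 * x ^ 2 + 1) / (2 * y)) ^ 2 - 2 * x) ^ 3 + (((3 * x ^ 2 + 1) / (2 * y)) ^ 2 - 2 * x) - 1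
  field_simp
  ring_nf
  linear_combination (64 * y ^ 6) * hc

private def ecSeq : ℕ → ℚ × ℚ := fun n => ecDouble^[n] (25/36, 37/216)

private lemma ecSeq_spec : ∀ n : ℕ,
    (ecSeq n).2 ^ 2 = (ecSeq n).1 ^ 3 + (ecSeq n).1 - 1 ∧ (ecSeq n).1 ≠ 0 ∧
      padicValRat 2 (ecSeq n).1 = -2 - 2 * n := by
  intro n
  induction n with
  | zero =>
    refine ⟨by norm_num [ecSeq], by norm_num [ecSeq], ?_⟩
    have h25 : padicValRat 2 (((25:ℕ):ℚ)) = 0 := by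
      rw [padicValRat.of_nat, padicValNat.eq_zero_of_not_dvd (by norm_num)]
      norm_num
    have h9 : padicValRat 2 ((((9:ℕ):ℚ))⁻¹) = 0 := by
      rw [padicValRat.inv, padicValRat.of_nat, padicValNat.eq_zero_of_not_dvd (by norm_num)]
      norm_num
    show padicValRat 2 ((25:ℚ)/36) = -2 - 2 * ((0 : ℕ) : ℤ)
    rw [show ((25:ℚ)/36) = ((25:ℕ):ℚ) * (((9:ℕ):ℚ))⁻¹ * ((((2:ℕ)):ℚ)^2)⁻¹ by norm_num,
      padicValRat.mul (by norm_num) (by norm_num),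
      padicValRat.mul (by norm_num) (by norm_num), h25, h9, padicValRat.self_pow_inv]
    norm_num
  | succ k ih =>
    obtain ⟨h1, h2, h3⟩ := ih
    have hv : padicValRat 2 (ecSeq k).1 ≤ -2 := by rw [h3]; linarith [Nat.zero_le k, Int.ofNat_nonneg k]
    have := step h1 h2 hv
    have he : ecSeq (k+1) = ecDouble (ecSeq k) := by
      simp [ecSeq, Function.iterate_succ_apply']
    rw [show ((ecSeq k).1, (ecSeq k).2) = ecSeq k from rfl] at this
    rw [he]
    refine ⟨this.1, this.2.1, ?_⟩
    rw [this.2.2, h3]; push_cast; ring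

/-- The point `(1,1)` lies on the curve `y² = x³ + x − 1`, and the rational points of this
curve are Zariski dense in it (equivalently, as the curve is irreducible of dimension one,
the set of rational points is infinite). -/
theorem rational_points_dense_248c1 :
    ((1 : ℚ) ^ 2 = 1 ^ 3 + 1 - 1) ∧
      {p : ℚ × ℚ | p.2 ^ 2 = p.1 ^ 3 + p.1 - 1}.Infinite := by
  refine ⟨by norm_num, ?_⟩
  apply Set.infinite_of_injective_forall_mem (f := ecSeq)
  · intro m n h
    have hm := (ecSeq_spec m).2.2
    have hn := (ecSeq_spec n).2.2
    rw [h] at hm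
    rw [hm] at hn
    omega
  · intro n
    exact (ecSeq_spec n).1
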